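/- Let ({A₁, A₂}, Q) be a projective reconstruction of point correspondences P by two finite cameras with distinct centers, with principal rays n₁, n₂. Then there exists H ∈ GL₄(ℝ) such that ({A₁H⁻¹, A₂H⁻¹}, {Hq_k}) is a chiral reconstruction of P if and only if the products (n₁ᵀq_k)(n₂ᵀq_k) have the same sign for all k = 1,…,n. -/

import Mathlib

open Matrix

noncomputable section

/-- Left 3x3 block `G` of a 3x4 camera matrix `A = [G | t]`. -/
def leftBlock (A : Matrix (Fin 3) (Fin 4) ℝ) : Matrix (Fin 3) (Fin 3) ℝ :=
  Matrix.of fun i j => A i j.castSucc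

/-- Last column `t` of a 3x4 camera matrix `A = [G | t]`. -/
def tCol (A : Matrix (Fin 3) (Fin 4) ℝ) : Fin 3 → ℝ := fun i => A i 3

/-- A camera is finite if its left 3x3 block is invertible. -/
def FiniteCam (A : Matrix (Fin 3) (Fin 4) ℝ) : Prop := (leftBlock A).det ≠ 0

/-- The center `(-G⁻¹ t, 1)` of a finite camera. -/
def camCenter (A : Matrix (Fin 3) (Fin 4) ℝ) : Fin 4 → ℝ :=
  Fin.snoc (-((leftBlock A)⁻¹ *ᵥ tCol A)) 1

/-- The principal ray `det G • (third row of A)`. -/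
def principalRay (A : Matrix (Fin 3) (Fin 4) ℝ) : Fin 4 → ℝ :=
  (leftBlock A).det • A 2

/-- `n_∞ = (0,0,0,1)`. -/
def nInf : Fin 4 → ℝ := Fin.snoc (0 : Fin 3 → ℝ) 1

/-- The chiral domain `D_𝒜`: the closure, within `ℝ⁴ ∖ {0}` (i.e. ambient closure
intersected with `ℝ⁴ ∖ {0}`), of the set of finite vectors (last coordinate nonzero)
having positive depth in every camera of the arrangement. -/
def chiralDomain {m : ℕ} (A : Fin m → Matrix (Fin 3) (Fin 4) ℝ) : Set (Fin 4 → ℝ) :=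
  closure {q : Fin 4 → ℝ | nInf ⬝ᵥ q ≠ 0 ∧ ∀ i, 0 < (principalRay (A i) ⬝ᵥ q) * (nInf ⬝ᵥ q)}
    ∩ {q : Fin 4 → ℝ | q ≠ 0}

/-- `(𝒜, Q)` is a projective reconstruction of the point correspondences `p`. -/
def IsProjRecon {m n : ℕ} (A : Fin m → Matrix (Fin 3) (Fin 4) ℝ)
    (q : Fin n → Fin 4 → ℝ) (p : Fin m → Fin n → Fin 2 → ℝ) : Prop :=
  (∀ i, FiniteCam (A i)) ∧ (∀ k, q k ≠ 0) ∧
    ∀ i k, ∃ w : ℝ, w ≠ 0 ∧ A i *ᵥ q k = w • (Fin.snoc (p i k) 1 : Fin 3 → ℝ)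

/-- A chiral reconstruction: a projective reconstruction all of whose world points lie
in the chiral domain of the camera arrangement. -/
def IsChiralRecon {m n : ℕ} (A : Fin m → Matrix (Fin 3) (Fin 4) ℝ)
    (q : Fin n → Fin 4 → ℝ) (p : Fin m → Fin n → Fin 2 → ℝ) : Prop :=
  IsProjRecon A q p ∧ ∀ k, q k ∈ chiralDomain A

/-- The cone of all nonnegative combinations of a finite family of vectors in `ℝ⁴`. -/
def coneHull {k : ℕ} (v : Fin k → Fin 4 → ℝ) : Set (Fin 4 → ℝ) :=
  {x | ∃ c : Fin k → ℝ, (∀ l, 0 ≤ c l) ∧ x = ∑ l, c l • v l}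

/-- The dual cone `K* = {y : yᵀx ≥ 0 for all x ∈ K}`. -/
def dualConeSet (S : Set (Fin 4 → ℝ)) : Set (Fin 4 → ℝ) :=
  {y | ∀ x ∈ S, 0 ≤ y ⬝ᵥ x}

section Aux

open Matrix Finset

lemma three_eq_last : (3 : Fin 4) = Fin.last 3 := rfl
lemma two_eq_last : (2 : Fin 3) = Fin.last 2 := rfl

/-- Stack a 3x4 matrix with an extra row to get a 4x4 matrix. -/
def stk (M : Matrix (Fin 3) (Fin 4) ℝ) (r : Fin 4 → ℝ) : Matrix (Fin 4) (Fin 4) ℝ :=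
  Matrix.of (Fin.snoc (M : Fin 3 → Fin 4 → ℝ) r)

lemma stk_castSucc (M : Matrix (Fin 3) (Fin 4) ℝ) (r : Fin 4 → ℝ) (i : Fin 3) :
    stk M r i.castSucc = M i := by
  funext j
  show (Fin.snoc (α := fun _ : Fin 4 => Fin 4 → ℝ) M r) i.castSucc j = M i j
  exact congrFun (Fin.snoc_castSucc (α := fun _ : Fin 4 => Fin 4 → ℝ) (p := M) (x := r) i) j

lemma stk_last (M : Matrix (Fin 3) (Fin 4) ℝ) (r : Fin 4 → ℝ) :
    stk M r 3 = r := by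
  rw [three_eq_last]
  funext j
  show (Fin.snoc (α := fun _ : Fin 4 => Fin 4 → ℝ) M r) (Fin.last 3) j = r j
  exact congrFun (Fin.snoc_last (α := fun _ : Fin 4 => Fin 4 → ℝ) (p := M) (x := r)) j

lemma nInf_apply_castSucc (j : Fin 3) : nInf j.castSucc = 0 := by
  simp [nInf]

lemma nInf_apply_last : nInf 3 = 1 := by
  rw [three_eq_last]; exact Fin.snoc_last (α := fun _ => ℝ) _ _

lemma dot_nInf (x : Fin 4 → ℝ) : nInf ⬝ᵥ x = x 3 := by
  rw [dotProduct, Fin.sum_univ_castSucc]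
  simp [nInf_apply_castSucc, ← three_eq_last, nInf_apply_last]

lemma det_stk_nInf (M : Matrix (Fin 3) (Fin 4) ℝ) :
    (stk M nInf).det = (leftBlock M).det := by
  have h := Matrix.det_submatrix_equiv_self (finSumFinEquiv (m := 3) (n := 1)) (stk M nInf)
  rw [← h]
  have natadd3 : ∀ i : Fin 1, Fin.natAdd 3 i = 3 := by
    intro i
    have : i = 0 := Subsingleton.elim i 0
    subst this; decide
  have : (stk M nInf).submatrix finSumFinEquiv finSumFinEquiv =
      Matrix.fromBlocks (leftBlock M) (Matrix.of fun i (_ : Fin 1) => tCol M i) 0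
        (1 : Matrix (Fin 1) (Fin 1) ℝ) := by
    ext i j
    cases i with
    | inl i =>
      cases j with
      | inl j =>
        simp only [Matrix.submatrix_apply, finSumFinEquiv_apply_left, Matrix.fromBlocks_apply₁₁]
        rw [show Fin.castAdd 1 i = i.castSucc from rfl, show Fin.castAdd 1 j = j.castSucc from rfl]
        rw [stk_castSucc]; rfl
      | inr j =>
        simp only [Matrix.submatrix_apply, finSumFinEquiv_apply_left, finSumFinEquiv_apply_right,
          Matrix.fromBlocks_apply₁₂]
        rw [show Fin.castAdd 1 i = i.castSucc from rfl, natadd3 j, stk_castSucc]; rfl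
    | inr i =>
      cases j with
      | inl j =>
        simp only [Matrix.submatrix_apply, finSumFinEquiv_apply_left, finSumFinEquiv_apply_right,
          Matrix.fromBlocks_apply₂₁]
        rw [natadd3 i, show Fin.castAdd 1 j = j.castSucc from rfl, stk_last]
        simpa using nInf_apply_castSucc j
      | inr j =>
        simp only [Matrix.submatrix_apply, finSumFinEquiv_apply_right, Matrix.fromBlocks_apply₂₂]
        rw [natadd3 i, natadd3 j, stk_last, nInf_apply_last]
        have : i = j := Subsingleton.elim i j
        simp [this, Matrix.one_apply]
  rw [this, Matrix.det_fromBlocks_zero₂₁]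
  simp

end Aux
section Aux2
open Matrix Finset

lemma stk_mul (M : Matrix (Fin 3) (Fin 4) ℝ) (r : Fin 4 → ℝ) (H : Matrix (Fin 4) (Fin 4) ℝ) :
    stk M r * H = stk (M * H) (r ᵥ* H) := by
  ext i j
  refine Fin.lastCases ?_ ?_ i
  · rw [Matrix.mul_apply, ← three_eq_last]
    simp only [stk_last]
    rw [Matrix.vecMul, dotProduct]
  · intro i
    rw [Matrix.mul_apply]
    simp only [stk_castSucc]
    rw [Matrix.mul_apply]

lemma stk_updateRow (M : Matrix (Fin 3) (Fin 4) ℝ) (r s : Fin 4 → ℝ) :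
    (stk M r).updateRow 3 s = stk M s := by
  ext i j
  rcases eq_or_ne i 3 with rfl | hi
  · rw [Matrix.updateRow_self, stk_last]
  · rw [Matrix.updateRow_ne hi]
    have : i ≠ Fin.last 3 := by rwa [← three_eq_last]
    obtain ⟨i', rfl⟩ := Fin.exists_castSucc_eq.mpr this
    rw [stk_castSucc, stk_castSucc]

lemma det_stk_add (M : Matrix (Fin 3) (Fin 4) ℝ) (a b : Fin 4 → ℝ) :
    (stk M (a + b)).det = (stk M a).det + (stk M b).det := by
  have h1 : stk M (a + b) = (stk M a).updateRow 3 (a + b) := (stk_updateRow M a (a+b)).symm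
  rw [h1, Matrix.det_updateRow_add, stk_updateRow, stk_updateRow]

lemma det_stk_smul (M : Matrix (Fin 3) (Fin 4) ℝ) (c : ℝ) (a : Fin 4 → ℝ) :
    (stk M (c • a)).det = c * (stk M a).det := by
  have h1 : stk M (c • a) = (stk M a).updateRow 3 (c • a) := (stk_updateRow M a (c • a)).symm
  rw [h1, Matrix.det_updateRow_smul, stk_updateRow]

lemma det_stk_row (M : Matrix (Fin 3) (Fin 4) ℝ) (i : Fin 3) :
    (stk M (M i)).det = 0 := by
  apply Matrix.det_zero_of_row_eq (i := i.castSucc) (j := 3)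
  · rw [three_eq_last]
    exact Fin.ne_of_lt (Fin.castSucc_lt_last i)
  · rw [stk_castSucc, stk_last]

/-- `det (stk M ·)` as a linear map. -/
def Dlin (M : Matrix (Fin 3) (Fin 4) ℝ) : (Fin 4 → ℝ) →ₗ[ℝ] ℝ where
  toFun h := (stk M h).det
  map_add' := det_stk_add M
  map_smul' := det_stk_smul M

end Aux2
section Aux3
open Matrix Finset

lemma camCenter_last (A : Matrix (Fin 3) (Fin 4) ℝ) : camCenter A 3 = 1 := by
  rw [camCenter, three_eq_last]; exact Fin.snoc_last (α := fun _ => ℝ) _ _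

lemma camCenter_castSucc (A : Matrix (Fin 3) (Fin 4) ℝ) (j : Fin 3) :
    camCenter A j.castSucc = -((leftBlock A)⁻¹ *ᵥ tCol A) j := by
  rw [camCenter]; simp

lemma camCenter_ne_zero (A : Matrix (Fin 3) (Fin 4) ℝ) : camCenter A ≠ 0 := by
  intro h
  have := congrFun h 3
  rw [camCenter_last] at this
  simpa using this

lemma mulVec_camCenter {A : Matrix (Fin 3) (Fin 4) ℝ} (hA : FiniteCam A) :
    A *ᵥ camCenter A = 0 := by
  funext l
  have hGinv : leftBlock A * (leftBlock A)⁻¹ = 1 :=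
    Matrix.mul_nonsing_inv _ (isUnit_iff_ne_zero.mpr hA)
  have key : leftBlock A *ᵥ ((leftBlock A)⁻¹ *ᵥ tCol A) = tCol A := by
    rw [Matrix.mulVec_mulVec, hGinv, Matrix.one_mulVec]
  have keyl := congrFun key l
  rw [Matrix.mulVec, dotProduct, Fin.sum_univ_castSucc, ← three_eq_last]
  rw [camCenter_last]
  simp only [camCenter_castSucc, mul_one]
  rw [Matrix.mulVec, dotProduct] at keyl
  have : ∀ j : Fin 3, A l j.castSucc * -((leftBlock A)⁻¹ *ᵥ tCol A) j
      = -(leftBlock A l j * ((leftBlock A)⁻¹ *ᵥ tCol A) j) := by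
    intro j; simp only [leftBlock, Matrix.of_apply]; ring
  rw [Finset.sum_congr rfl (fun j _ => this j), Finset.sum_neg_distrib, keyl]
  show -tCol A l + A l 3 = 0
  rw [tCol]; ring

/-- The fundamental representation: `det [A; h] = det G * ⟨h, center⟩`. -/
lemma det_stk_eq {A : Matrix (Fin 3) (Fin 4) ℝ} (hA : FiniteCam A) (h : Fin 4 → ℝ) :
    (stk A h).det = (leftBlock A).det * (h ⬝ᵥ camCenter A) := by
  classical
  set u : Fin 4 → ℝ := fun j => (stk A (fun l => if j = l then 1 else 0)).det with hu
  have hrep : ∀ x : Fin 4 → ℝ, (stk A x).det = x ⬝ᵥ u := by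
    intro x
    have hx := pi_eq_sum_univ x
    calc (stk A x).det = Dlin A x := rfl
      _ = Dlin A (∑ j, x j • fun l => if j = l then (1:ℝ) else 0) := by rw [← hx]
      _ = ∑ j, x j • Dlin A (fun l => if j = l then (1:ℝ) else 0) := by
          rw [map_sum]
          exact Finset.sum_congr rfl fun j _ => by rw [_root_.map_smul]
      _ = x ⬝ᵥ u := by rw [dotProduct]; rfl
  -- u is in the kernel of A
  have hker : A *ᵥ u = 0 := by
    funext l
    have : (A *ᵥ u) l = Dlin A (A l) := by
      rw [Matrix.mulVec, dotProduct]
      show _ = (stk A (A l)).det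
      rw [hrep (A l), dotProduct]
    rw [this]
    exact det_stk_row A l
  have hu3 : u 3 = (leftBlock A).det := by
    have : (fun l => if (3 : Fin 4) = l then (1:ℝ) else 0) = nInf := by
      funext l
      refine Fin.lastCases ?_ ?_ l
      · rw [← three_eq_last, nInf_apply_last]; simp
      · intro l
        rw [nInf_apply_castSucc]
        have : (3 : Fin 4) ≠ l.castSucc := by
          rw [three_eq_last]; exact (Fin.ne_of_lt (Fin.castSucc_lt_last l)).symm
        simp [this]
    show (stk A _).det = _
    rw [this, det_stk_nInf]
  -- u = det G • camCenter
  have huc : u = (leftBlock A).det • camCenter A := by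
    set w : Fin 4 → ℝ := u - (leftBlock A).det • camCenter A with hw
    have hwker : A *ᵥ w = 0 := by
      rw [hw, Matrix.mulVec_sub, hker, Matrix.mulVec_smul, mulVec_camCenter hA]
      simp
    have hw3 : w 3 = 0 := by
      simp [hw, hu3, camCenter_last]
    have hw' : (fun j : Fin 3 => w j.castSucc) = 0 := by
      have hG : leftBlock A *ᵥ (fun j : Fin 3 => w j.castSucc) = 0 := by
        funext l
        have := congrFun hwker l
        rw [Matrix.mulVec, dotProduct, Fin.sum_univ_castSucc, ← three_eq_last, hw3,
          mul_zero, add_zero] at this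
        rw [Matrix.mulVec, dotProduct]
        simpa [leftBlock] using this
      have hinv : (leftBlock A)⁻¹ * leftBlock A = 1 :=
        Matrix.nonsing_inv_mul _ (isUnit_iff_ne_zero.mpr hA)
      calc (fun j : Fin 3 => w j.castSucc)
          = ((leftBlock A)⁻¹ * leftBlock A) *ᵥ (fun j : Fin 3 => w j.castSucc) := by
            rw [hinv, Matrix.one_mulVec]
        _ = (leftBlock A)⁻¹ *ᵥ (leftBlock A *ᵥ (fun j : Fin 3 => w j.castSucc)) := by
            rw [Matrix.mulVec_mulVec]
        _ = 0 := by rw [hG, Matrix.mulVec_zero]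
    have : w = 0 := by
      funext j
      refine Fin.lastCases ?_ ?_ j
      · rw [← three_eq_last, hw3]; rfl
      · intro j
        have := congrFun hw' j
        simpa using this
    rw [hw] at this
    funext j
    have := congrFun this j
    simp only [Pi.sub_apply, Pi.zero_apply, sub_eq_zero] at this
    rw [this]
  rw [hrep, huc]
  rw [dotProduct_smul]
  rw [smul_eq_mul]

end Aux3
section Aux4
open Matrix Finset

lemma nInf_vecMul (H : Matrix (Fin 4) (Fin 4) ℝ) : nInf ᵥ* H = H 3 := by
  funext j
  rw [Matrix.vecMul, dotProduct, Fin.sum_univ_castSucc]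
  simp [nInf_apply_castSucc, ← three_eq_last, nInf_apply_last]

lemma principalRay_dot (A : Matrix (Fin 3) (Fin 4) ℝ) (x : Fin 4 → ℝ) :
    principalRay A ⬝ᵥ x = (leftBlock A).det * (A *ᵥ x) 2 := by
  rw [principalRay, smul_dotProduct]
  rfl

lemma det_leftBlock_homography {A : Matrix (Fin 3) (Fin 4) ℝ} {H : Matrix (Fin 4) (Fin 4) ℝ}
    (hH : IsUnit H.det) :
    (leftBlock (A * H⁻¹)).det * H.det = (stk A (H 3)).det := by
  have h1 : stk (A * H⁻¹) nInf * H = stk A (H 3) := by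
    rw [stk_mul, nInf_vecMul, Matrix.mul_assoc, Matrix.nonsing_inv_mul H hH, Matrix.mul_one]
  have := congrArg Matrix.det h1
  rw [Matrix.det_mul, det_stk_nInf] at this
  exact this

/-- The 3x4 matrix `[diag(c,1,1) | 0]`. -/
def Mdiag (c : ℝ) : Matrix (Fin 3) (Fin 4) ℝ :=
  Matrix.of fun i j => if j = i.castSucc then (if i = 0 then c else 1) else 0

/-- Homography with prescribed last row `h` and determinant `c * h 3`. -/
def HH (c : ℝ) (h : Fin 4 → ℝ) : Matrix (Fin 4) (Fin 4) ℝ := stk (Mdiag c) h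

lemma leftBlock_Mdiag (c : ℝ) :
    leftBlock (Mdiag c) = Matrix.diagonal ![c, 1, 1] := by
  ext i j
  show Mdiag c i j.castSucc = _
  rw [Mdiag, Matrix.diagonal_apply]
  by_cases hij : i = j
  · subst hij
    simp only [Matrix.of_apply, if_pos rfl]
    fin_cases i <;> simp
  · have : j.castSucc ≠ i.castSucc := fun hc => hij (Fin.castSucc_injective _ hc).symm
    simp [Matrix.of_apply, this, Ne.symm hij, hij]

lemma det_leftBlock_Mdiag (c : ℝ) : (leftBlock (Mdiag c)).det = c := by
  rw [leftBlock_Mdiag, Matrix.det_diagonal, Fin.prod_univ_three]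
  simp

lemma tCol_Mdiag (c : ℝ) : tCol (Mdiag c) = 0 := by
  funext i
  show Mdiag c i 3 = 0
  rw [Mdiag]
  have : (3 : Fin 4) ≠ i.castSucc := by
    rw [three_eq_last]; exact (Fin.ne_of_lt (Fin.castSucc_lt_last i)).symm
  simp [this]

lemma camCenter_Mdiag (c : ℝ) : camCenter (Mdiag c) = nInf := by
  rw [camCenter, tCol_Mdiag, Matrix.mulVec_zero, neg_zero]
  rfl

lemma det_HH (c : ℝ) (h : Fin 4 → ℝ) (hc : c ≠ 0) : (HH c h).det = c * h 3 := by
  have : FiniteCam (Mdiag c) := by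
    rw [FiniteCam, det_leftBlock_Mdiag]; exact hc
  rw [HH, det_stk_eq this, det_leftBlock_Mdiag, camCenter_Mdiag, dotProduct_comm, dot_nInf]

lemma HH_last (c : ℝ) (h : Fin 4 → ℝ) : HH c h 3 = h := stk_last _ _

end Aux4
section Main
open Matrix Finset

lemma main_construct {n : ℕ} (A : Fin 2 → Matrix (Fin 3) (Fin 4) ℝ)
    (q : Fin n → Fin 4 → ℝ) (p : Fin 2 → Fin n → Fin 2 → ℝ)
    (hrec : IsProjRecon A q p) (h : Fin 4 → ℝ) (s : ℝ) (hs : s ≠ 0) (h3 : h 3 ≠ 0)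
    (hD : ∀ i, (stk (A i) h).det ≠ 0)
    (hC : ∀ i k, 0 < s * (leftBlock (A i)).det * (stk (A i) h).det *
      (principalRay (A i) ⬝ᵥ q k) * (h ⬝ᵥ q k)) :
    ∃ H : Matrix (Fin 4) (Fin 4) ℝ, IsUnit H.det ∧
      IsChiralRecon (fun i => A i * H⁻¹) (fun k => H *ᵥ q k) p := by
  set H := HH (s * h 3) h with hHdef
  have hdet : H.det = s * h 3 * h 3 := det_HH _ _ (mul_ne_zero hs h3)
  have hunit : IsUnit H.det := by
    rw [hdet]; exact isUnit_iff_ne_zero.mpr (mul_ne_zero (mul_ne_zero hs h3) h3)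
  have hrow : H 3 = h := HH_last _ _
  -- the transformed cameras compose back
  have hBA : ∀ i : Fin 2, (A i * H⁻¹) * H = A i := by
    intro i
    rw [Matrix.mul_assoc, Matrix.nonsing_inv_mul H hunit, Matrix.mul_one]
  have hBq : ∀ (i : Fin 2) k, (A i * H⁻¹) *ᵥ (H *ᵥ q k) = A i *ᵥ q k := by
    intro i k
    rw [Matrix.mulVec_mulVec, hBA]
  have hdid : ∀ i : Fin 2, (leftBlock (A i * H⁻¹)).det * (s * h 3 * h 3) = (stk (A i) h).det := by
    intro i
    rw [← hdet, det_leftBlock_homography hunit, hrow]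
  have hfin : ∀ i : Fin 2, FiniteCam (A i * H⁻¹) := by
    intro i
    intro hz
    have := hdid i
    rw [hz, zero_mul] at this
    exact hD i this.symm
  have hqne : ∀ k, H *ᵥ q k ≠ 0 := by
    intro k hz
    apply hrec.2.1 k
    have : H⁻¹ *ᵥ (H *ᵥ q k) = q k := by
      rw [Matrix.mulVec_mulVec, Matrix.nonsing_inv_mul H hunit, Matrix.one_mulVec]
    rw [hz, Matrix.mulVec_zero] at this
    exact this.symm
  have hdotq : ∀ k, nInf ⬝ᵥ (H *ᵥ q k) = h ⬝ᵥ q k := by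
    intro k
    rw [dotProduct_mulVec, nInf_vecMul, hrow]
  have hkey : ∀ (i : Fin 2) k,
      0 < (principalRay (A i * H⁻¹) ⬝ᵥ (H *ᵥ q k)) * (nInf ⬝ᵥ (H *ᵥ q k)) := by
    intro i k
    rw [hdotq, principalRay_dot, hBq]
    set d := (leftBlock (A i * H⁻¹)).det with hd
    set e := (leftBlock (A i)).det with he
    set r := (A i *ᵥ q k) 2 with hr
    have heq : principalRay (A i) ⬝ᵥ q k = e * r := principalRay_dot (A i) (q k)
    have hKi := hC i k
    rw [heq, ← hdid i] at hKi
    have hene : e ≠ 0 := hrec.1 i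
    have hcpos : 0 < (s * e * h 3) ^ 2 := by positivity
    have hrw : s * e * (d * (s * h 3 * h 3)) * (e * r) * (h ⬝ᵥ q k)
        = (s * e * h 3) ^ 2 * (d * r * (h ⬝ᵥ q k)) := by ring
    rw [hrw] at hKi
    nlinarith [hKi, hcpos]
  refine ⟨H, hunit, ⟨⟨hfin, hqne, ?_⟩, ?_⟩⟩
  · intro i k
    obtain ⟨w, hw, hwe⟩ := hrec.2.2 i k
    exact ⟨w, hw, by rw [hBq]; exact hwe⟩
  · intro k
    constructor
    · apply subset_closure
      refine ⟨?_, fun i => hkey i k⟩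
      intro hz
      have := hkey 0 k
      rw [hz, mul_zero] at this
      exact lt_irrefl 0 this
    · exact hqne k

end Main
section Fwd
open Matrix Finset

lemma continuous_dotleft (v : Fin 4 → ℝ) : Continuous fun x : Fin 4 → ℝ => v ⬝ᵥ x := by
  unfold dotProduct
  exact continuous_finset_sum _ fun i _ => continuous_const.mul (continuous_apply i)

lemma snoc_two (v : Fin 2 → ℝ) (x : ℝ) : (Fin.snoc v x : Fin 3 → ℝ) 2 = x := by
  rw [two_eq_last]; exact Fin.snoc_last (α := fun _ => ℝ) _ _

lemma mulVec_two {n : ℕ} {A : Fin 2 → Matrix (Fin 3) (Fin 4) ℝ}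
    {q : Fin n → Fin 4 → ℝ} {p : Fin 2 → Fin n → Fin 2 → ℝ}
    (hrec : IsProjRecon A q p) (i : Fin 2) (k : Fin n) : (A i *ᵥ q k) 2 ≠ 0 := by
  obtain ⟨w, hw, hwe⟩ := hrec.2.2 i k
  rw [hwe]
  show w * (Fin.snoc (p i k) 1 : Fin 3 → ℝ) 2 ≠ 0
  rw [snoc_two, mul_one]
  exact hw

lemma forward_dir {n : ℕ} (A : Fin 2 → Matrix (Fin 3) (Fin 4) ℝ)
    (q : Fin n → Fin 4 → ℝ) (p : Fin 2 → Fin n → Fin 2 → ℝ)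
    (hrec : IsProjRecon A q p) (H : Matrix (Fin 4) (Fin 4) ℝ) (hunit : IsUnit H.det)
    (hchir : IsChiralRecon (fun i => A i * H⁻¹) (fun k => H *ᵥ q k) p) :
    (∀ k, 0 < (principalRay (A 0) ⬝ᵥ q k) * (principalRay (A 1) ⬝ᵥ q k)) ∨
     (∀ k, (principalRay (A 0) ⬝ᵥ q k) * (principalRay (A 1) ⬝ᵥ q k) < 0) := by
  set B := fun i : Fin 2 => A i * H⁻¹ with hB
  have hBq : ∀ (i : Fin 2) k, B i *ᵥ (H *ᵥ q k) = A i *ᵥ q k := by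
    intro i k
    rw [Matrix.mulVec_mulVec, hB, Matrix.mul_assoc, Matrix.nonsing_inv_mul H hunit,
      Matrix.mul_one]
  set d := fun i : Fin 2 => (leftBlock (B i)).det with hd
  set e := fun i : Fin 2 => (leftBlock (A i)).det with he
  set r := fun (i : Fin 2) (k : Fin n) => (A i *ᵥ q k) 2 with hr
  have hdne : ∀ i, d i ≠ 0 := hchir.1.1
  have hene : ∀ i, e i ≠ 0 := hrec.1
  have hrne : ∀ i k, r i k ≠ 0 := fun i k => mulVec_two hrec i k
  have hN : ∀ (i : Fin 2) k, principalRay (A i) ⬝ᵥ q k = e i * r i k :=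
    fun i k => principalRay_dot (A i) (q k)
  have hP : ∀ (i : Fin 2) k, principalRay (B i) ⬝ᵥ (H *ᵥ q k) = d i * r i k := by
    intro i k
    rw [principalRay_dot, hBq]
  -- closure argument
  have hposP : ∀ k, 0 < (d 0 * r 0 k) * (d 1 * r 1 k) := by
    intro k
    have hmem := (hchir.2 k).1
    set f : (Fin 4 → ℝ) → ℝ :=
      fun x => (principalRay (B 0) ⬝ᵥ x) * (principalRay (B 1) ⬝ᵥ x) with hf
    have hfc : Continuous f := (continuous_dotleft _).mul (continuous_dotleft _)
    have hclosed : IsClosed {x : Fin 4 → ℝ | 0 ≤ f x} :=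
      isClosed_le continuous_const hfc
    have hsub : {x : Fin 4 → ℝ | nInf ⬝ᵥ x ≠ 0 ∧
        ∀ i, 0 < (principalRay ((fun i => A i * H⁻¹) i) ⬝ᵥ x) * (nInf ⬝ᵥ x)} ⊆
        {x : Fin 4 → ℝ | 0 ≤ f x} := by
      intro x hx
      have h0 := hx.2 0
      have h1 := hx.2 1
      have hz : nInf ⬝ᵥ x ≠ 0 := hx.1
      show 0 ≤ (principalRay (B 0) ⬝ᵥ x) * (principalRay (B 1) ⬝ᵥ x)
      nlinarith [h0, h1, sq_nonneg (nInf ⬝ᵥ x)]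
    have := closure_minimal hsub hclosed hmem
    have hge : 0 ≤ f (H *ᵥ q k) := this
    rw [hf] at hge
    simp only at hge
    rw [hP 0 k, hP 1 k] at hge
    have hne : (d 0 * r 0 k) * (d 1 * r 1 k) ≠ 0 :=
      mul_ne_zero (mul_ne_zero (hdne 0) (hrne 0 k)) (mul_ne_zero (hdne 1) (hrne 1 k))
    exact lt_of_le_of_ne hge (Ne.symm hne)
  have hsgn : e 0 * e 1 * (d 0 * d 1) ≠ 0 :=
    mul_ne_zero (mul_ne_zero (hene 0) (hene 1)) (mul_ne_zero (hdne 0) (hdne 1))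
  rcases lt_or_gt_of_ne hsgn with hneg | hpos
  · right
    intro k
    rw [hN 0 k, hN 1 k]
    nlinarith [mul_neg_of_neg_of_pos hneg (hposP k), sq_nonneg (d 0 * d 1), hposP k]
  · left
    intro k
    rw [hN 0 k, hN 1 k]
    nlinarith [mul_pos hpos (hposP k), sq_nonneg (d 0 * d 1), hposP k]

end Fwd
section BwdPos
open Matrix Finset Filter Topology

lemma ev_pos_of_pos {f : ℝ → ℝ} (hf : Continuous f) (h0 : 0 < f 0) :
    ∀ᶠ t in 𝓝[>] (0:ℝ), 0 < f t := by
  have hU : IsOpen (f ⁻¹' Set.Ioi 0) := hf.isOpen_preimage _ isOpen_Ioi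
  have hmem : f ⁻¹' Set.Ioi 0 ∈ 𝓝 (0:ℝ) := hU.mem_nhds h0
  exact Filter.eventually_of_mem (nhdsWithin_le_nhds hmem) (fun t ht => ht)

lemma det_stk_principalRay_self {A : Matrix (Fin 3) (Fin 4) ℝ} :
    (stk A (principalRay A)).det = 0 := by
  rw [principalRay, det_stk_smul, det_stk_row, mul_zero]

lemma det_stk_nInf' (A : Matrix (Fin 3) (Fin 4) ℝ) :
    (stk A nInf).det = (leftBlock A).det := det_stk_nInf A

lemma backward_pos {n : ℕ} (A : Fin 2 → Matrix (Fin 3) (Fin 4) ℝ)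
    (q : Fin n → Fin 4 → ℝ) (p : Fin 2 → Fin n → Fin 2 → ℝ)
    (hrec : IsProjRecon A q p)
    (hpos : ∀ k, 0 < (principalRay (A 0) ⬝ᵥ q k) * (principalRay (A 1) ⬝ᵥ q k)) :
    ∃ H : Matrix (Fin 4) (Fin 4) ℝ, IsUnit H.det ∧
      IsChiralRecon (fun i => A i * H⁻¹) (fun k => H *ᵥ q k) p := by
  set e := fun i : Fin 2 => (leftBlock (A i)).det with he
  have hene : ∀ i, e i ≠ 0 := hrec.1
  set n0 := principalRay (A 0) with hn0
  set γ := (stk (A 1) n0).det with hγ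
  set τ : ℝ := if 0 ≤ γ * e 1 then 1 else -1 with hτ
  have hτne : τ ≠ 0 := by
    rw [hτ]; split <;> norm_num
  have hbr1 : ∀ t : ℝ, 0 < t → 0 < τ * t * (γ + τ * t * e 1) * e 1 := by
    intro t ht
    rcases le_or_gt 0 (γ * e 1) with hge | hlt
    · rw [hτ, if_pos hge]
      have : (1:ℝ) * t * (γ + 1 * t * e 1) * e 1 = t * (γ * e 1) + t^2 * (e 1)^2 := by ring
      rw [this]
      have h1 : 0 ≤ t * (γ * e 1) := mul_nonneg ht.le hge
      have h2 : 0 < t^2 * (e 1)^2 := mul_pos (pow_pos ht 2) (sq_pos_of_ne_zero (hene 1))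
      linarith
    · rw [hτ, if_neg (not_le.mpr hlt)]
      have : (-1:ℝ) * t * (γ + -1 * t * e 1) * e 1 = -(t * (γ * e 1)) + t^2 * (e 1)^2 := by ring
      rw [this]
      have h1 : 0 < -(t * (γ * e 1)) := by
        have := mul_pos ht (neg_pos.mpr hlt)
        nlinarith
      have h2 : 0 < t^2 * (e 1)^2 := mul_pos (pow_pos ht 2) (sq_pos_of_ne_zero (hene 1))
      linarith
  -- eventual conditions
  have hev0 : ∀ᶠ t in 𝓝[>] (0:ℝ), ∀ k,
      0 < (n0 ⬝ᵥ q k) * (n0 ⬝ᵥ q k + τ * t * q k 3) := by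
    rw [Filter.eventually_all]
    intro k
    apply ev_pos_of_pos
    · exact continuous_const.mul (continuous_const.add
        ((continuous_const.mul continuous_id).mul continuous_const))
    · have hN0 : n0 ⬝ᵥ q k ≠ 0 := by
        rw [hn0, principalRay_dot]
        exact mul_ne_zero (hene 0) (mulVec_two hrec 0 k)
      simp only [mul_zero, zero_mul, add_zero]
      exact mul_self_pos.mpr hN0
  have hev1 : ∀ᶠ t in 𝓝[>] (0:ℝ), ∀ k,
      0 < (principalRay (A 1) ⬝ᵥ q k) * (n0 ⬝ᵥ q k + τ * t * q k 3) := by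
    rw [Filter.eventually_all]
    intro k
    apply ev_pos_of_pos
    · exact continuous_const.mul (continuous_const.add
        ((continuous_const.mul continuous_id).mul continuous_const))
    · simp only [mul_zero, zero_mul, add_zero]
      have := hpos k
      nlinarith [hpos k]
  have hev3 : ∀ᶠ t in 𝓝[>] (0:ℝ), n0 3 + τ * t ≠ 0 := by
    rcases eq_or_ne (n0 3) 0 with hz | hz
    · refine Filter.eventually_of_mem self_mem_nhdsWithin (fun t ht => ?_)
      rw [hz, zero_add]
      exact mul_ne_zero hτne (ne_of_gt ht)
    · have hc : Continuous fun t : ℝ => n0 3 + τ * t :=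
        continuous_const.add (continuous_const.mul continuous_id)
      have h0 : (fun t : ℝ => n0 3 + τ * t) 0 ≠ 0 := by simpa using hz
      have := (hc.continuousAt (x := (0:ℝ))).eventually_ne h0
      exact nhdsWithin_le_nhds this
  obtain ⟨t, ⟨⟨ht0, ht1, ht3⟩, htpos⟩⟩ :=
    ((hev0.and (hev1.and hev3)).and (eventually_mem_nhdsWithin)).exists
  have htpos : (0:ℝ) < t := htpos
  set h : Fin 4 → ℝ := n0 + (τ * t) • nInf with hh
  have hD0 : (stk (A 0) h).det = τ * t * e 0 := by
    rw [hh, det_stk_add, det_stk_smul, hn0, det_stk_principalRay_self, det_stk_nInf, zero_add]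
  have hD1 : (stk (A 1) h).det = γ + τ * t * e 1 := by
    rw [hh, det_stk_add, det_stk_smul, det_stk_nInf]
  have hdot : ∀ k, h ⬝ᵥ q k = n0 ⬝ᵥ q k + τ * t * q k 3 := by
    intro k
    rw [hh, add_dotProduct, smul_dotProduct, dot_nInf, smul_eq_mul]
  have hst : τ * t ≠ 0 := mul_ne_zero hτne (ne_of_gt htpos)
  have h3 : h 3 ≠ 0 := by
    have : h 3 = n0 3 + τ * t := by
      rw [hh]
      show n0 3 + (τ * t) • nInf 3 = _
      rw [nInf_apply_last, smul_eq_mul, mul_one]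
    rw [this]; exact ht3
  have hbr := hbr1 t htpos
  have hmid : γ + τ * t * e 1 ≠ 0 := by
    intro hzz
    rw [hzz, mul_zero, zero_mul] at hbr
    exact lt_irrefl 0 hbr
  apply main_construct A q p hrec h (τ * t) hst h3
  · intro i
    fin_cases i
    · show (stk (A 0) h).det ≠ 0
      rw [hD0]; exact mul_ne_zero hst (hene 0)
    · show (stk (A 1) h).det ≠ 0
      rw [hD1]; exact hmid
  · intro i k
    fin_cases i
    · show 0 < τ * t * (leftBlock (A 0)).det * (stk (A 0) h).det *
        (principalRay (A 0) ⬝ᵥ q k) * (h ⬝ᵥ q k)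
      rw [hD0, hdot]
      have h1 := ht0 k
      have h2 : (0:ℝ) < (τ * t * e 0)^2 := sq_pos_of_ne_zero (mul_ne_zero hst (hene 0))
      have hexp : τ * t * (leftBlock (A 0)).det * (τ * t * e 0) *
          (principalRay (A 0) ⬝ᵥ q k) * (n0 ⬝ᵥ q k + τ * t * q k 3)
          = (τ * t * e 0)^2 * ((n0 ⬝ᵥ q k) * (n0 ⬝ᵥ q k + τ * t * q k 3)) := by
        rw [hn0]; rw [he]; ring
      rw [hexp]
      exact mul_pos h2 h1
    · show 0 < τ * t * (leftBlock (A 1)).det * (stk (A 1) h).det *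
        (principalRay (A 1) ⬝ᵥ q k) * (h ⬝ᵥ q k)
      rw [hD1, hdot]
      have h1 := ht1 k
      have hexp : τ * t * (leftBlock (A 1)).det * (γ + τ * t * e 1) *
          (principalRay (A 1) ⬝ᵥ q k) * (n0 ⬝ᵥ q k + τ * t * q k 3)
          = (τ * t * (γ + τ * t * e 1) * e 1) *
            ((principalRay (A 1) ⬝ᵥ q k) * (n0 ⬝ᵥ q k + τ * t * q k 3)) := by
        rw [he]; ring
      rw [hexp]
      exact mul_pos hbr h1

end BwdPos
section Dual
open Matrix Finset Filter Topology

lemma dot_sum {m : ℕ} (nn : Fin 4 → ℝ) (w : Fin m → Fin 4 → ℝ) :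
    nn ⬝ᵥ (∑ l, w l) = ∑ l, nn ⬝ᵥ w l := by
  unfold dotProduct
  rw [Finset.sum_comm]
  congr 1
  funext i
  rw [← Finset.mul_sum]
  congr 1
  simp

lemma zero_mem_coneHull {m : ℕ} (v : Fin m → Fin 4 → ℝ) : (0 : Fin 4 → ℝ) ∈ coneHull v :=
  ⟨0, fun l => le_refl 0, by simp⟩

lemma smul_mem_coneHull {m : ℕ} (v : Fin m → Fin 4 → ℝ) (k : Fin m) {t : ℝ} (ht : 0 ≤ t) :
    t • v k ∈ coneHull v := by
  classical
  refine ⟨Pi.single k t, fun l => ?_, ?_⟩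
  · rcases eq_or_ne l k with rfl | hne
    · simpa using ht
    · simp [Pi.single_apply, hne]
  · rw [Finset.sum_eq_single k]
    · simp
    · intro b _ hb
      simp [Pi.single_apply, hb]
    · simp

lemma convex_coneHull {m : ℕ} (v : Fin m → Fin 4 → ℝ) : Convex ℝ (coneHull v) := by
  intro x hx y hy a b ha hb _
  obtain ⟨cx, hcx, rfl⟩ := hx
  obtain ⟨cy, hcy, rfl⟩ := hy
  refine ⟨fun l => a * cx l + b * cy l,
    fun l => add_nonneg (mul_nonneg ha (hcx l)) (mul_nonneg hb (hcy l)), ?_⟩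
  rw [Finset.smul_sum, Finset.smul_sum, ← Finset.sum_add_distrib]
  congr 1
  funext l
  rw [smul_smul, smul_smul, add_smul]

lemma mem_dual_of_mem_coneHull {m : ℕ} {v : Fin m → Fin 4 → ℝ} {h x : Fin 4 → ℝ}
    (hh : ∀ k, 0 ≤ h ⬝ᵥ v k) (hx : x ∈ coneHull v) : 0 ≤ h ⬝ᵥ x := by
  obtain ⟨c, hc, rfl⟩ := hx
  rw [dot_sum]
  apply Finset.sum_nonneg
  intro l _
  rw [dotProduct_smul, smul_eq_mul]
  exact mul_nonneg (hc l) (hh l)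

/-- Linear functionals on `Fin 4 → ℝ` are given by dot products. -/
lemma clm_eq_dot (f : (Fin 4 → ℝ) →L[ℝ] ℝ) :
    ∃ hvec : Fin 4 → ℝ, ∀ x, f x = hvec ⬝ᵥ x := by
  classical
  refine ⟨fun j => f (fun l => if j = l then 1 else 0), fun x => ?_⟩
  have hx := pi_eq_sum_univ x
  calc f x = f (∑ j, x j • fun l => if j = l then (1:ℝ) else 0) := by rw [← hx]
    _ = ∑ j, x j • f (fun l => if j = l then (1:ℝ) else 0) := by
        rw [map_sum]
        exact Finset.sum_congr rfl fun j _ => by rw [_root_.map_smul]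
    _ = _ := by
        rw [dotProduct]
        exact Finset.sum_congr rfl fun j _ => by rw [smul_eq_mul, mul_comm]

lemma notall {m : ℕ} (v : Fin m → Fin 4 → ℝ) (h0 : Fin 4 → ℝ)
    (hh0 : ∀ k, 0 < h0 ⬝ᵥ v k) (nn c : Fin 4 → ℝ)
    (hnv : ∀ k, 0 < nn ⬝ᵥ v k) (hnc : nn ⬝ᵥ c = 0) (hc : c ≠ 0) :
    ∃ h : Fin 4 → ℝ, (∀ k, 0 < h ⬝ᵥ v k) ∧ h ⬝ᵥ c < 0 := by
  by_contra hcon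
  push_neg at hcon
  have hweak : ∀ h : Fin 4 → ℝ, (∀ k, 0 ≤ h ⬝ᵥ v k) → 0 ≤ h ⬝ᵥ c := by
    intro h hk
    have key : ∀ t : ℝ, 0 < t → 0 ≤ h ⬝ᵥ c + t * (h0 ⬝ᵥ c) := by
      intro t ht
      have hmem : ∀ k, 0 < (h + t • h0) ⬝ᵥ v k := by
        intro k
        rw [add_dotProduct, smul_dotProduct, smul_eq_mul]
        exact add_pos_of_nonneg_of_pos (hk k) (mul_pos ht (hh0 k))
      have := hcon _ hmem
      rw [add_dotProduct, smul_dotProduct, smul_eq_mul] at this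
      exact this
    set K := h0 ⬝ᵥ c with hK
    rcases le_or_gt K 0 with hKle | hKpos
    · have := key 1 one_pos
      nlinarith
    · by_contra hneg
      push_neg at hneg
      have ht : 0 < -(h ⬝ᵥ c) / (2 * K) := div_pos (by linarith) (by linarith)
      have := key _ ht
      have heq : -(h ⬝ᵥ c) / (2 * K) * K = -(h ⬝ᵥ c) / 2 := by
        field_simp
      rw [heq] at this
      linarith
  -- c is in the closure of the cone hull
  have hcmem : c ∈ closure (coneHull v) := by
    by_contra hnot
    obtain ⟨f, u, hfc, hfS⟩ :=
      geometric_hahn_banach_point_closed ((convex_coneHull v).closure) isClosed_closure hnot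
    have hu0 : u < 0 := by
      have := hfS 0 (subset_closure (zero_mem_coneHull v))
      rwa [map_zero] at this
    have hfv : ∀ k, 0 ≤ f (v k) := by
      intro k
      by_contra hneg
      push_neg at hneg
      set t := (u - 1) / f (v k) with htdef
      have ht : 0 < t := div_pos_of_neg_of_neg (by linarith) hneg
      have hmem := smul_mem_coneHull v k ht.le
      have := hfS _ (subset_closure hmem)
      rw [_root_.map_smul, smul_eq_mul, htdef, div_mul_cancel₀ _ (ne_of_lt hneg)] at this
      linarith
    obtain ⟨hvec, hvs⟩ := clm_eq_dot f
    have : 0 ≤ hvec ⬝ᵥ c := by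
      apply hweak
      intro k
      rw [← hvs]
      exact hfv k
    rw [← hvs] at this
    linarith
  -- derive c = 0, contradiction
  set M := ∑ k, ‖v k‖ / (nn ⬝ᵥ v k) with hM
  have hT : coneHull v ⊆ {x : Fin 4 → ℝ | ‖x‖ ≤ M * (nn ⬝ᵥ x)} := by
    rintro x ⟨cf, hcf, rfl⟩
    have h1 : ‖∑ l, cf l • v l‖ ≤ ∑ l, cf l * ‖v l‖ := by
      refine (norm_sum_le _ _).trans ?_
      apply Finset.sum_le_sum
      intro l _
      rw [norm_smul, Real.norm_eq_abs, abs_of_nonneg (hcf l)]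
    have h2 : nn ⬝ᵥ (∑ l, cf l • v l) = ∑ l, cf l * (nn ⬝ᵥ v l) := by
      rw [dot_sum]
      exact Finset.sum_congr rfl fun l _ => by
        rw [dotProduct_smul, smul_eq_mul]
    have h3 : ∀ l, cf l * ‖v l‖ = (‖v l‖ / (nn ⬝ᵥ v l)) * (cf l * (nn ⬝ᵥ v l)) := by
      intro l
      have hd : nn ⬝ᵥ v l ≠ 0 := (hnv l).ne'
      field_simp
    have h4 : ∑ l, cf l * ‖v l‖ ≤ M * ∑ l, cf l * (nn ⬝ᵥ v l) := by
      rw [hM, Finset.sum_mul]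
      apply Finset.sum_le_sum
      intro l hl
      rw [h3 l]
      apply mul_le_mul_of_nonneg_left
      · exact Finset.single_le_sum
          (fun j _ => mul_nonneg (hcf j) (hnv j).le) hl
      · exact div_nonneg (norm_nonneg _) (hnv l).le
    show ‖∑ l, cf l • v l‖ ≤ M * (nn ⬝ᵥ (∑ l, cf l • v l))
    rw [h2]
    exact h1.trans h4
  have hTc : IsClosed {x : Fin 4 → ℝ | ‖x‖ ≤ M * (nn ⬝ᵥ x)} :=
    isClosed_le continuous_norm (continuous_const.mul (continuous_dotleft nn))
  have := closure_minimal hT hTc hcmem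
  have hnorm : ‖c‖ ≤ M * (nn ⬝ᵥ c) := this
  rw [hnc, mul_zero] at hnorm
  exact hc (norm_le_zero_iff.mp hnorm)

end Dual
section Plane
open Finset

lemma plane_lemma {A B C D : ℝ}
    (hyp : ∀ t : ℝ, 0 ≤ t → t ≤ 1 → 0 ≤ (t * A + (1 - t) * B) * (t * C + (1 - t) * D))
    (hA : 0 < A) (hD : D < 0) : 0 < C ∧ B < 0 ∧ A * D = B * C := by
  have hC0 : 0 ≤ C := by
    have := hyp 1 (by norm_num) le_rfl
    nlinarith
  have hB0 : B ≤ 0 := by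
    have := hyp 0 le_rfl (by norm_num)
    nlinarith
  have hAB : 0 < A - B := by linarith
  have hCpos : 0 < C := by
    rcases lt_or_eq_of_le hC0 with h | h
    · exact h
    · exfalso
      -- C = 0; pick t = (t1+1)/2 with t1 = -B/(A-B)
      set t1 := -B / (A - B) with ht1
      have ht10 : 0 ≤ t1 := div_nonneg (by linarith) hAB.le
      have ht11 : t1 < 1 := by
        rw [ht1, div_lt_one hAB]; linarith
      set t := (t1 + 1) / 2 with ht
      have h0t : 0 ≤ t := by rw [ht]; linarith
      have ht1' : t ≤ 1 := by rw [ht]; linarith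
      have hf : t * A + (1 - t) * B = A / 2 := by
        rw [ht, ht1]
        field_simp
        ring
      have hg : t * C + (1 - t) * D = (1 - t) * D := by rw [← h]; ring
      have hlt : (1 - t) * D < 0 := mul_neg_of_pos_of_neg (by rw [ht]; linarith) hD
      have := hyp t h0t ht1'
      rw [hf, hg] at this
      nlinarith
  have hCD : 0 < C - D := by linarith
  have hBneg : B < 0 := by
    rcases lt_or_eq_of_le hB0 with h | h
    · exact h
    · exfalso
      set t2 := -D / (C - D) with ht2
      have ht20 : 0 < t2 := div_pos (by linarith) hCD
      have ht21 : t2 ≤ 1 := by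
        rw [ht2, div_le_one hCD]; linarith
      set t := t2 / 2 with ht
      have h0t : 0 ≤ t := by rw [ht]; linarith
      have ht1' : t ≤ 1 := by rw [ht]; linarith
      have hg : t * C + (1 - t) * D = D / 2 := by
        rw [ht, ht2]
        field_simp
        ring
      have hf : t * A + (1 - t) * B = t * A := by rw [h]; ring
      have := hyp t h0t ht1'
      rw [hf, hg] at this
      nlinarith [mul_pos (mul_pos ht20 hA) (neg_pos.mpr hD)]
  refine ⟨hCpos, hBneg, ?_⟩
  set t1 := -B / (A - B) with ht1
  set t2 := -D / (C - D) with ht2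
  have ht10 : 0 ≤ t1 := div_nonneg (by linarith) hAB.le
  have ht11 : t1 ≤ 1 := by rw [ht1, div_le_one hAB]; linarith
  have ht20 : 0 ≤ t2 := div_nonneg (by linarith) hCD.le
  have ht21 : t2 ≤ 1 := by rw [ht2, div_le_one hCD]; linarith
  set t := (t1 + t2) / 2 with ht
  have h0t : 0 ≤ t := by rw [ht]; linarith
  have ht1' : t ≤ 1 := by rw [ht]; linarith
  have hf : t * A + (1 - t) * B = (B * C - A * D) / (2 * (C - D)) := by
    rw [ht, ht1, ht2]
    field_simp
    ring
  have hg : t * C + (1 - t) * D = (D * A - C * B) / (2 * (A - B)) := by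
    rw [ht, ht1, ht2]
    field_simp
    ring
  have hprod := hyp t h0t ht1'
  rw [hf, hg] at hprod
  have hkey : 0 ≤ -(B * C - A * D)^2 / (4 * (C - D) * (A - B)) := by
    have : (B * C - A * D) / (2 * (C - D)) * ((D * A - C * B) / (2 * (A - B)))
        = -(B * C - A * D)^2 / (4 * (C - D) * (A - B)) := by
      field_simp
      ring
    rwa [this] at hprod
  have hden : 0 < 4 * (C - D) * (A - B) := by positivity
  have hsq : (B * C - A * D)^2 ≤ 0 := by
    by_contra hpos
    push_neg at hpos
    have : -(B * C - A * D)^2 / (4 * (C - D) * (A - B)) < 0 :=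
      div_neg_of_neg_of_pos (by linarith) hden
    linarith
  have : B * C - A * D = 0 := by
    nlinarith [sq_nonneg (B * C - A * D)]
  linarith

end Plane
section Sep
open Matrix Finset Filter Topology

lemma combo_pos {α β : ℝ} (hα : 0 < α) (hβ : 0 < β) {t : ℝ} (ht0 : 0 ≤ t) (ht1 : t ≤ 1) :
    0 < t * α + (1 - t) * β := by
  rcases eq_or_lt_of_le ht0 with rfl | ht
  · simpa using hβ
  · exact add_pos_of_pos_of_nonneg (mul_pos ht hα)
      (mul_nonneg (by linarith) hβ.le)

lemma exists_sep {m : ℕ} (v : Fin m → Fin 4 → ℝ) (n0v n1v c0 c1 : Fin 4 → ℝ)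
    (hv0 : ∀ k, 0 < n0v ⬝ᵥ v k) (hv1 : ∀ k, n1v ⬝ᵥ v k < 0)
    (hc00 : n0v ⬝ᵥ c0 = 0) (hc11 : n1v ⬝ᵥ c1 = 0)
    (hc03 : c0 3 = 1) (hc13 : c1 3 = 1) (hne : c0 ≠ c1) :
    ∃ h : Fin 4 → ℝ, (∀ k, 0 < h ⬝ᵥ v k) ∧ (h ⬝ᵥ c0) * (h ⬝ᵥ c1) < 0 := by
  classical
  have hh0 : ∀ k, 0 < (n0v - n1v) ⬝ᵥ v k := by
    intro k
    rw [sub_dotProduct]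
    have := hv0 k; have := hv1 k; linarith
  have hc0ne : c0 ≠ 0 := fun h => by
    have := congrFun h 3; rw [hc03] at this; simpa using this
  have hc1ne : c1 ≠ 0 := fun h => by
    have := congrFun h 3; rw [hc13] at this; simpa using this
  have hn1v' : ∀ k, 0 < (-n1v) ⬝ᵥ v k := by
    intro k; rw [neg_dotProduct]; linarith [hv1 k]
  by_contra hcon
  push_neg at hcon
  -- witnesses
  obtain ⟨ha, hha, hac0⟩ := notall v (n0v - n1v) hh0 n0v (-c0) hv0
    (by rw [dotProduct_neg, hc00, neg_zero]) (neg_ne_zero.mpr hc0ne)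
  have hA : 0 < ha ⬝ᵥ c0 := by rw [dotProduct_neg] at hac0; linarith
  obtain ⟨hb, hhb, hbc1⟩ := notall v (n0v - n1v) hh0 (-n1v) c1 hn1v'
    (by rw [neg_dotProduct, hc11, neg_zero]) hc1ne
  -- plane hypothesis for combinations of two elements of V
  have hcombo : ∀ x y : Fin 4 → ℝ, (∀ k, 0 < x ⬝ᵥ v k) → (∀ k, 0 < y ⬝ᵥ v k) →
      ∀ t : ℝ, 0 ≤ t → t ≤ 1 →
      0 ≤ (t * (x ⬝ᵥ c0) + (1 - t) * (y ⬝ᵥ c0)) * (t * (x ⬝ᵥ c1) + (1 - t) * (y ⬝ᵥ c1)) := by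
    intro x y hx hy t ht0 ht1
    have hmem : ∀ k, 0 < (t • x + (1 - t) • y) ⬝ᵥ v k := by
      intro k
      rw [add_dotProduct, smul_dotProduct, smul_dotProduct,
        smul_eq_mul, smul_eq_mul]
      exact combo_pos (hx k) (hy k) ht0 ht1
    have := hcon _ hmem
    rwa [add_dotProduct, smul_dotProduct, smul_dotProduct,
      add_dotProduct, smul_dotProduct, smul_dotProduct,
      smul_eq_mul, smul_eq_mul, smul_eq_mul, smul_eq_mul] at this
  -- first application of the plane lemma
  obtain ⟨hCa, hBb, hrel⟩ := plane_lemma (hcombo ha hb hha hhb) hA hbc1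
  -- proportionality on all of V
  have hprop : ∀ h : Fin 4 → ℝ, (∀ k, 0 < h ⬝ᵥ v k) →
      (ha ⬝ᵥ c0) * (h ⬝ᵥ c1) = (ha ⬝ᵥ c1) * (h ⬝ᵥ c0) := by
    intro h hh
    rcases lt_trichotomy (h ⬝ᵥ c0) 0 with hXneg | hXzero | hXpos
    · have hY0 : h ⬝ᵥ c1 ≤ 0 := by
        have := hcon h hh
        nlinarith
      rcases lt_or_eq_of_le hY0 with hYneg | hYzero
      · obtain ⟨_, _, hrel2⟩ := plane_lemma (hcombo ha h hha hh) hA hYneg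
        linarith [hrel2]
      · exfalso
        have hAX : 0 < ha ⬝ᵥ c0 - h ⬝ᵥ c0 := by linarith
        have ht0 : 0 < -(h ⬝ᵥ c0) / (2 * (ha ⬝ᵥ c0 - h ⬝ᵥ c0)) :=
          div_pos (by linarith) (by linarith)
        have ht1 : -(h ⬝ᵥ c0) / (2 * (ha ⬝ᵥ c0 - h ⬝ᵥ c0)) < 1 := by
          rw [div_lt_one (by linarith)]; linarith
        set t := -(h ⬝ᵥ c0) / (2 * (ha ⬝ᵥ c0 - h ⬝ᵥ c0)) with htdef
        have hf : t * (ha ⬝ᵥ c0) + (1 - t) * (h ⬝ᵥ c0) = (h ⬝ᵥ c0) / 2 := by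
          rw [htdef]; field_simp; ring
        have hcc := hcombo ha h hha hh t ht0.le ht1.le
        rw [hf, hYzero, mul_zero, add_zero] at hcc
        nlinarith [mul_pos ht0 hCa]
    · have hYzero : h ⬝ᵥ c1 = 0 := by
        rcases lt_trichotomy (h ⬝ᵥ c1) 0 with hYneg | hy | hYpos
        · exfalso
          obtain ⟨_, hBneg, _⟩ := plane_lemma (hcombo ha h hha hh) hA hYneg
          exact absurd hXzero (ne_of_lt hBneg)
        · exact hy
        · exfalso
          have hYD : 0 < h ⬝ᵥ c1 - hb ⬝ᵥ c1 := by linarith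
          have ht20 : 0 < -(hb ⬝ᵥ c1) / (h ⬝ᵥ c1 - hb ⬝ᵥ c1) := div_pos (by linarith) hYD
          have ht21 : -(hb ⬝ᵥ c1) / (h ⬝ᵥ c1 - hb ⬝ᵥ c1) < 1 := by
            rw [div_lt_one hYD]; linarith
          set t2 := -(hb ⬝ᵥ c1) / (h ⬝ᵥ c1 - hb ⬝ᵥ c1) with ht2def
          set t := (t2 + 1) / 2 with htdef
          have ht0 : 0 ≤ t := by rw [htdef]; linarith
          have ht1 : t ≤ 1 := by rw [htdef]; linarith
          have hg : t * (h ⬝ᵥ c1) + (1 - t) * (hb ⬝ᵥ c1) = (h ⬝ᵥ c1) / 2 := by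
            rw [htdef, ht2def]; field_simp; ring
          have hf : t * (h ⬝ᵥ c0) + (1 - t) * (hb ⬝ᵥ c0) = (1 - t) * (hb ⬝ᵥ c0) := by
            rw [hXzero, mul_zero, zero_add]
          have hcc := hcombo h hb hh hhb t ht0 ht1
          rw [hg, hf] at hcc
          have h1t : 0 < 1 - t := by rw [htdef]; linarith
          nlinarith [mul_neg_of_pos_of_neg h1t hBb]
      rw [hXzero, hYzero, mul_zero, mul_zero]
    · obtain ⟨hYpos, _, hrel2⟩ := plane_lemma (hcombo h hb hh hhb) hXpos hbc1
      have hz : (hb ⬝ᵥ c0) * ((ha ⬝ᵥ c0) * (h ⬝ᵥ c1) - (ha ⬝ᵥ c1) * (h ⬝ᵥ c0)) = 0 := by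
        linear_combination (h ⬝ᵥ c0) * hrel - (ha ⬝ᵥ c0) * hrel2
      have := (mul_eq_zero.mp hz).resolve_left (ne_of_lt hBb)
      linarith [sub_eq_zero.mp this]
  -- the functional vanishes on an open set, so the vectors are proportional
  have hcoord : ∀ j : Fin 4, (ha ⬝ᵥ c0) * c1 j = (ha ⬝ᵥ c1) * c0 j := by
    intro j
    have hev' : ∀ᶠ t in 𝓝 (0:ℝ), ∀ k, 0 < (ha + t • (Pi.single j 1 : Fin 4 → ℝ)) ⬝ᵥ v k := by
      rw [Filter.eventually_all]
      intro k
      have hc : Continuous fun t : ℝ => (ha + t • (Pi.single j 1 : Fin 4 → ℝ)) ⬝ᵥ v k := by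
        simp only [add_dotProduct, smul_dotProduct, smul_eq_mul]
        exact continuous_const.add (continuous_id.mul continuous_const)
      have h0' : 0 < (ha + (0:ℝ) • (Pi.single j 1 : Fin 4 → ℝ)) ⬝ᵥ v k := by
        simpa using hha k
      have hU : IsOpen ((fun t : ℝ => (ha + t • (Pi.single j 1 : Fin 4 → ℝ)) ⬝ᵥ v k) ⁻¹' Set.Ioi 0) :=
        hc.isOpen_preimage _ isOpen_Ioi
      exact Filter.eventually_of_mem (hU.mem_nhds h0') (fun t ht => ht)
    have hev : ∀ᶠ t in 𝓝[≠] (0:ℝ), ∀ k, 0 < (ha + t • (Pi.single j 1 : Fin 4 → ℝ)) ⬝ᵥ v k :=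
      nhdsWithin_le_nhds hev'
    obtain ⟨t, htmem, htne⟩ := (hev.and (eventually_mem_nhdsWithin)).exists
    have htne' : t ≠ 0 := htne
    have h1 := hprop _ htmem
    rw [add_dotProduct, add_dotProduct, smul_dotProduct,
      smul_dotProduct, single_dotProduct, single_dotProduct,
      smul_eq_mul, smul_eq_mul, one_mul, one_mul] at h1
    have hz : t * ((ha ⬝ᵥ c0) * c1 j - (ha ⬝ᵥ c1) * c0 j) = 0 := by
      linear_combination h1
    have := (mul_eq_zero.mp hz).resolve_left htne'
    linarith [sub_eq_zero.mp this]
  -- coordinate 3 gives equality of the two dot products, then c0 = c1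
  have hAC : ha ⬝ᵥ c0 = ha ⬝ᵥ c1 := by
    have := hcoord 3
    rwa [hc03, hc13, mul_one, mul_one] at this
  apply hne
  funext j
  have h1 := hcoord j
  rw [← hAC] at h1
  exact (mul_left_cancel₀ (ne_of_gt hA) h1).symm

end Sep
section BwdNeg
open Matrix Finset Filter Topology

lemma principalRay_dot_center {A : Matrix (Fin 3) (Fin 4) ℝ} (hA : FiniteCam A) :
    principalRay A ⬝ᵥ camCenter A = 0 := by
  rw [principalRay_dot, mulVec_camCenter hA]
  simp

lemma backward_neg {n : ℕ} (A : Fin 2 → Matrix (Fin 3) (Fin 4) ℝ)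
    (q : Fin n → Fin 4 → ℝ) (p : Fin 2 → Fin n → Fin 2 → ℝ)
    (hrec : IsProjRecon A q p)
    (hdist : camCenter (A 0) ≠ camCenter (A 1))
    (hneg : ∀ k, (principalRay (A 0) ⬝ᵥ q k) * (principalRay (A 1) ⬝ᵥ q k) < 0) :
    ∃ H : Matrix (Fin 4) (Fin 4) ℝ, IsUnit H.det ∧
      IsChiralRecon (fun i => A i * H⁻¹) (fun k => H *ᵥ q k) p := by
  classical
  have hene : ∀ i, (leftBlock (A i)).det ≠ 0 := hrec.1
  set ε : Fin n → ℝ := fun k => if 0 < principalRay (A 0) ⬝ᵥ q k then 1 else -1 with hε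
  set v : Fin n → Fin 4 → ℝ := fun k => ε k • q k with hv
  have hN0ne : ∀ k, principalRay (A 0) ⬝ᵥ q k ≠ 0 := by
    intro k hz
    have := hneg k
    rw [hz, zero_mul] at this
    exact lt_irrefl 0 this
  have hv0 : ∀ k, 0 < principalRay (A 0) ⬝ᵥ v k := by
    intro k
    rw [hv]
    simp only [dotProduct_smul, smul_eq_mul]
    rcases lt_or_gt_of_ne (hN0ne k) with hlt | hgt
    · rw [hε]; simp only [if_neg (not_lt.mpr hlt.le)]; nlinarith
    · rw [hε]; simp only [if_pos hgt]; nlinarith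
  have hv1 : ∀ k, principalRay (A 1) ⬝ᵥ v k < 0 := by
    intro k
    rw [hv]
    simp only [dotProduct_smul, smul_eq_mul]
    rcases lt_or_gt_of_ne (hN0ne k) with hlt | hgt
    · rw [hε]; simp only [if_neg (not_lt.mpr hlt.le)]; nlinarith [hneg k]
    · rw [hε]; simp only [if_pos hgt]; nlinarith [hneg k]
  have hc00 : principalRay (A 0) ⬝ᵥ camCenter (A 0) = 0 := principalRay_dot_center (hene 0)
  have hc11 : principalRay (A 1) ⬝ᵥ camCenter (A 1) = 0 := principalRay_dot_center (hene 1)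
  obtain ⟨h₁, hh₁v, hh₁sep⟩ := exists_sep v (principalRay (A 0)) (principalRay (A 1))
    (camCenter (A 0)) (camCenter (A 1)) hv0 hv1 hc00 hc11
    (camCenter_last (A 0)) (camCenter_last (A 1)) hdist
  -- perturb to ensure nonzero last coordinate
  obtain ⟨h, hhv, hhsep, hh3⟩ :
      ∃ h : Fin 4 → ℝ, (∀ k, 0 < h ⬝ᵥ v k) ∧
        (h ⬝ᵥ camCenter (A 0)) * (h ⬝ᵥ camCenter (A 1)) < 0 ∧ h 3 ≠ 0 := by
    rcases eq_or_ne (h₁ 3) 0 with h3z | h3nz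
    · -- perturb
      have hev1 : ∀ᶠ δ in 𝓝 (0:ℝ), ∀ k, 0 < (h₁ + δ • nInf) ⬝ᵥ v k := by
        rw [Filter.eventually_all]
        intro k
        have hc : Continuous fun δ : ℝ => (h₁ + δ • nInf) ⬝ᵥ v k := by
          simp only [add_dotProduct, smul_dotProduct, smul_eq_mul]
          exact continuous_const.add (continuous_id.mul continuous_const)
        have h0' : 0 < (h₁ + (0:ℝ) • nInf) ⬝ᵥ v k := by simpa using hh₁v k
        have hU := hc.isOpen_preimage _ (isOpen_Ioi (a := (0:ℝ)))
        exact Filter.eventually_of_mem (hU.mem_nhds h0') (fun δ hδ => hδ)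
      have hev2 : ∀ᶠ δ in 𝓝 (0:ℝ),
          ((h₁ + δ • nInf) ⬝ᵥ camCenter (A 0)) * ((h₁ + δ • nInf) ⬝ᵥ camCenter (A 1)) < 0 := by
        have hc : Continuous fun δ : ℝ =>
            ((h₁ + δ • nInf) ⬝ᵥ camCenter (A 0)) * ((h₁ + δ • nInf) ⬝ᵥ camCenter (A 1)) := by
          simp only [add_dotProduct, smul_dotProduct, smul_eq_mul]
          exact (continuous_const.add (continuous_id.mul continuous_const)).mul
            (continuous_const.add (continuous_id.mul continuous_const))
        have h0' : ((h₁ + (0:ℝ) • nInf) ⬝ᵥ camCenter (A 0)) *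
            ((h₁ + (0:ℝ) • nInf) ⬝ᵥ camCenter (A 1)) < 0 := by simpa using hh₁sep
        have hU := hc.isOpen_preimage _ (isOpen_Iio (a := (0:ℝ)))
        exact Filter.eventually_of_mem (hU.mem_nhds h0') (fun δ hδ => hδ)
      have hev : ∀ᶠ δ in 𝓝[≠] (0:ℝ), (∀ k, 0 < (h₁ + δ • nInf) ⬝ᵥ v k) ∧
          ((h₁ + δ • nInf) ⬝ᵥ camCenter (A 0)) * ((h₁ + δ • nInf) ⬝ᵥ camCenter (A 1)) < 0 :=
        nhdsWithin_le_nhds (hev1.and hev2)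
      obtain ⟨δ, ⟨hδ1, hδ2⟩, hδne⟩ := (hev.and (eventually_mem_nhdsWithin)).exists
      have hδne' : δ ≠ 0 := hδne
      refine ⟨h₁ + δ • nInf, hδ1, hδ2, ?_⟩
      show h₁ 3 + δ * nInf 3 ≠ 0
      rw [h3z, nInf_apply_last, mul_one, zero_add]
      exact hδne'
    · exact ⟨h₁, hh₁v, hh₁sep, h3nz⟩
  -- set up the construction
  have hsc0 : h ⬝ᵥ camCenter (A 0) ≠ 0 := by
    intro hz; rw [hz, zero_mul] at hhsep; exact lt_irrefl 0 hhsep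
  have hD : ∀ i : Fin 2, (stk (A i) h).det = (leftBlock (A i)).det * (h ⬝ᵥ camCenter (A i)) :=
    fun i => det_stk_eq (hene i) h
  have hsign : ∀ k, 0 < (principalRay (A 0) ⬝ᵥ q k) * (h ⬝ᵥ q k) ∧
      (principalRay (A 1) ⬝ᵥ q k) * (h ⬝ᵥ q k) < 0 := by
    intro k
    have hk := hhv k
    rw [hv] at hk
    simp only [dotProduct_smul, smul_eq_mul] at hk
    rcases lt_or_gt_of_ne (hN0ne k) with hlt | hgt
    · rw [hε] at hk; simp only [if_neg (not_lt.mpr hlt.le)] at hk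
      constructor
      · nlinarith
      · nlinarith [hneg k]
    · rw [hε] at hk; simp only [if_pos hgt] at hk
      constructor
      · nlinarith
      · nlinarith [hneg k]
  apply main_construct A q p hrec h
    ((leftBlock (A 0)).det ^ 2 * (h ⬝ᵥ camCenter (A 0)))
    (by
      apply mul_ne_zero _ hsc0
      exact pow_ne_zero 2 (hene 0))
    hh3
  · intro i
    rw [hD i]
    fin_cases i
    · exact mul_ne_zero (hene 0) hsc0
    · show (leftBlock (A 1)).det * (h ⬝ᵥ camCenter (A 1)) ≠ 0
      apply mul_ne_zero (hene 1)
      intro hz; rw [hz, mul_zero] at hhsep; exact lt_irrefl 0 hhsep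
  · intro i k
    fin_cases i
    · show 0 < (leftBlock (A 0)).det ^ 2 * (h ⬝ᵥ camCenter (A 0)) * (leftBlock (A 0)).det *
        (stk (A 0) h).det * (principalRay (A 0) ⬝ᵥ q k) * (h ⬝ᵥ q k)
      rw [hD 0]
      have hexp : (leftBlock (A 0)).det ^ 2 * (h ⬝ᵥ camCenter (A 0)) * (leftBlock (A 0)).det *
          ((leftBlock (A 0)).det * (h ⬝ᵥ camCenter (A 0))) * (principalRay (A 0) ⬝ᵥ q k) *
          (h ⬝ᵥ q k)
          = ((leftBlock (A 0)).det ^ 2 * (h ⬝ᵥ camCenter (A 0))) ^ 2 *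
            ((principalRay (A 0) ⬝ᵥ q k) * (h ⬝ᵥ q k)) := by ring
      rw [hexp]
      exact mul_pos (sq_pos_of_ne_zero (mul_ne_zero (pow_ne_zero 2 (hene 0)) hsc0))
        (hsign k).1
    · show 0 < (leftBlock (A 0)).det ^ 2 * (h ⬝ᵥ camCenter (A 0)) * (leftBlock (A 1)).det *
        (stk (A 1) h).det * (principalRay (A 1) ⬝ᵥ q k) * (h ⬝ᵥ q k)
      rw [hD 1]
      have hexp : (leftBlock (A 0)).det ^ 2 * (h ⬝ᵥ camCenter (A 0)) * (leftBlock (A 1)).det *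
          ((leftBlock (A 1)).det * (h ⬝ᵥ camCenter (A 1))) * (principalRay (A 1) ⬝ᵥ q k) *
          (h ⬝ᵥ q k)
          = ((leftBlock (A 0)).det * (leftBlock (A 1)).det) ^ 2 *
            (((h ⬝ᵥ camCenter (A 0)) * (h ⬝ᵥ camCenter (A 1))) *
              ((principalRay (A 1) ⬝ᵥ q k) * (h ⬝ᵥ q k))) := by ring
      rw [hexp]
      apply mul_pos (sq_pos_of_ne_zero (mul_ne_zero (hene 0) (hene 1)))
      exact mul_pos_of_neg_of_neg hhsep (hsign k).2

end BwdNeg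
/-- Hartley's two-view theorem: a two-view projective reconstruction with
distinct camera centers can be transformed by a homography to a chiral reconstruction iff
the products `(n₁ᵀq_k)(n₂ᵀq_k)` have the same sign for all `k`. -/
theorem two_view_chiral_iff_same_sign {n : ℕ}
    (A : Fin 2 → Matrix (Fin 3) (Fin 4) ℝ)
    (q : Fin n → Fin 4 → ℝ) (p : Fin 2 → Fin n → Fin 2 → ℝ)
    (hrec : IsProjRecon A q p)
    (hdist : camCenter (A 0) ≠ camCenter (A 1)) :
    (∃ H : Matrix (Fin 4) (Fin 4) ℝ, IsUnit H.det ∧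
        IsChiralRecon (fun i => A i * H⁻¹) (fun k => H *ᵥ q k) p) ↔
    ((∀ k, 0 < (principalRay (A 0) ⬝ᵥ q k) * (principalRay (A 1) ⬝ᵥ q k)) ∨
     (∀ k, (principalRay (A 0) ⬝ᵥ q k) * (principalRay (A 1) ⬝ᵥ q k) < 0)) := by
  constructor
  · rintro ⟨H, hunit, hchir⟩
    exact forward_dir A q p hrec H hunit hchir
  · rintro (hpos | hneg)
    · exact backward_pos A q p hrec hpos
    · exact backward_neg A q p hrec hdist hneg
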